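/- For every integer g > 0 there exist infinitely many integers m = 2p, with p prime, such that: (i) m can be written as m = 2(a² + b²) with a, b relatively prime integers, and every integer solution (a′, b′) of m = 2(a′² + b′²) satisfies (a′, b′) = (±a, ±b) or (a′, b′) = (±b, ±a); (ii) for every integer k with 0 < |k| ≤ g, the integer m + k has no primitive integer representation as a² + b²; (iii) m has no representation as a² + 4 b² with a, b integers. -/

import Mathlib

open Zsqrtd

lemma aux_sq_add_sq_eq_one {x y : ℤ} (h : x * x + y * y = 1) :
    (x = 1 ∧ y = 0) ∨ (x = -1 ∧ y = 0) ∨ (x = 0 ∧ y = 1) ∨ (x = 0 ∧ y = -1) := by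
  have hx : -1 ≤ x := by nlinarith
  have hx' : x ≤ 1 := by nlinarith
  have hy : -1 ≤ y := by nlinarith
  have hy' : y ≤ 1 := by nlinarith
  interval_cases x <;> interval_cases y <;> omega

lemma aux_irreducible {p : ℕ} (hp : p.Prime) (z : GaussianInt) (hz : z.norm = (p : ℤ)) :
    Irreducible z := by
  constructor
  · intro hu
    have h1 := Zsqrtd.norm_eq_one_iff.mpr hu
    rw [hz] at h1
    simp at h1
    exact hp.one_lt.ne' h1
  · intro a b hab
    have hn : (p : ℤ) = a.norm * b.norm := by rw [← hz, hab, Zsqrtd.norm_mul]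
    have hn' : p = a.norm.natAbs * b.norm.natAbs := by
      have := congrArg Int.natAbs hn
      simpa [Int.natAbs_mul] using this
    rcases hp.eq_one_or_self_of_dvd a.norm.natAbs ⟨_, hn'⟩ with h | h
    · exact Or.inl (Zsqrtd.norm_eq_one_iff.mp h)
    · refine Or.inr (Zsqrtd.norm_eq_one_iff.mp ?_)
      rw [h] at hn'
      have hp0 : 0 < p := hp.pos
      nlinarith [hn', hp0]

lemma aux_norm_eq (z : GaussianInt) : z.norm = z.re * z.re + z.im * z.im := by
  simp [Zsqrtd.norm_def]; try ring

/-- uniqueness of representation of a prime as a sum of two squares, up to sign and swap -/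
lemma aux_sq_add_sq_unique {p : ℕ} (hp : p.Prime) {a b a' b' : ℤ}
    (h : (p : ℤ) = a ^ 2 + b ^ 2) (h' : (p : ℤ) = a' ^ 2 + b' ^ 2) :
    ((a' = a ∨ a' = -a) ∧ (b' = b ∨ b' = -b)) ∨
    ((a' = b ∨ a' = -b) ∧ (b' = a ∨ b' = -a)) := by
  set z : GaussianInt := ⟨a, b⟩ with hzdef
  set w : GaussianInt := ⟨a', b'⟩ with hwdef
  have hz : z.norm = (p : ℤ) := by rw [aux_norm_eq]; simp [hzdef]; nlinarith [h]
  have hw : w.norm = (p : ℤ) := by rw [aux_norm_eq]; simp [hwdef]; nlinarith [h']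
  have hwprime : Prime w :=
    UniqueFactorizationMonoid.irreducible_iff_prime.mp (aux_irreducible hp w hw)
  have hdvd : w ∣ z * star z := by
    refine ⟨star w, ?_⟩
    have h1 : (z.norm : GaussianInt) = z * star z := Zsqrtd.norm_eq_mul_conj z
    have h2 : (w.norm : GaussianInt) = w * star w := Zsqrtd.norm_eq_mul_conj w
    rw [← h1, ← h2, hz, hw]
  have hp0 : (p : ℤ) ≠ 0 := by exact_mod_cast hp.pos.ne'
  rcases hwprime.2.2 _ _ hdvd with hd | hd
  · -- w ∣ z
    obtain ⟨u, hu⟩ := hd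
    have hnu : u.norm = 1 := by
      have : z.norm = w.norm * u.norm := by rw [hu, Zsqrtd.norm_mul]
      rw [hz, hw] at this
      have := mul_left_cancel₀ hp0 (by linarith : (p : ℤ) * 1 = (p : ℤ) * u.norm)
      omega
    have huu : u.re * u.re + u.im * u.im = 1 := by rw [← aux_norm_eq, hnu]
    have hre : a = a' * u.re - b' * u.im := by
      have := congrArg Zsqrtd.re hu
      simpa [hzdef, hwdef, Zsqrtd.re_mul, sub_eq_add_neg] using this
    have him : b = a' * u.im + b' * u.re := by
      have := congrArg Zsqrtd.im hu
      simpa [hzdef, hwdef, Zsqrtd.im_mul] using this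
    rcases aux_sq_add_sq_eq_one huu with ⟨h1, h2⟩ | ⟨h1, h2⟩ | ⟨h1, h2⟩ | ⟨h1, h2⟩ <;>
      rw [h1, h2] at hre him <;> [skip; skip; skip; skip] <;>
      first
        | (left; constructor <;> omega)
        | (right; constructor <;> omega)
  · -- w ∣ star z
    obtain ⟨u, hu⟩ := hd
    have hnu : u.norm = 1 := by
      have hsz : (star z).norm = (p : ℤ) := by rw [Zsqrtd.norm_conj, hz]
      have : (star z).norm = w.norm * u.norm := by rw [hu, Zsqrtd.norm_mul]
      rw [hsz, hw] at this
      have := mul_left_cancel₀ hp0 (by linarith : (p : ℤ) * 1 = (p : ℤ) * u.norm)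
      omega
    have huu : u.re * u.re + u.im * u.im = 1 := by rw [← aux_norm_eq, hnu]
    have hre : a = a' * u.re - b' * u.im := by
      have := congrArg Zsqrtd.re hu
      simpa [hzdef, hwdef, Zsqrtd.re_mul, Zsqrtd.re_star, sub_eq_add_neg] using this
    have him : -b = a' * u.im + b' * u.re := by
      have := congrArg Zsqrtd.im hu
      simpa [hzdef, hwdef, Zsqrtd.im_mul, Zsqrtd.im_star] using this
    rcases aux_sq_add_sq_eq_one huu with ⟨h1, h2⟩ | ⟨h1, h2⟩ | ⟨h1, h2⟩ | ⟨h1, h2⟩ <;>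
      rw [h1, h2] at hre him <;>
      first
        | (left; constructor <;> omega)
        | (right; constructor <;> omega)


lemma aux_gcd_eq_one {p : ℕ} (hp : p.Prime) {a b : ℤ} (h : (p : ℤ) = a ^ 2 + b ^ 2) :
    Int.gcd a b = 1 := by
  set d := Int.gcd a b with hd
  have hda : (d : ℤ) ∣ a := Int.gcd_dvd_left a b
  have hdb : (d : ℤ) ∣ b := Int.gcd_dvd_right a b
  have hdp : (d : ℤ) * d ∣ (p : ℤ) := by
    rw [h]
    exact dvd_add (by rw [sq]; exact mul_dvd_mul hda hda) (by rw [sq]; exact mul_dvd_mul hdb hdb)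
  have hdp' : d * d ∣ p := by exact_mod_cast hdp
  have hddvd : d ∣ p := dvd_trans (dvd_mul_right d d) hdp'
  rcases hp.eq_one_or_self_of_dvd d hddvd with h1 | h1
  · exact h1
  · exfalso
    rw [h1] at hdp'
    have := Nat.le_of_dvd hp.pos hdp'
    nlinarith [hp.two_le]

lemma aux_noPrimRep {n : ℤ} {q : ℕ} (hq : q.Prime) (h3 : q % 4 = 3) (hdvd : (q : ℤ) ∣ n) :
    ¬ ∃ a b : ℤ, Int.gcd a b = 1 ∧ n = a ^ 2 + b ^ 2 := by
  rintro ⟨a, b, hab, hn⟩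
  haveI := Fact.mk hq
  have h1 : IsSquare (-1 : ZMod n.natAbs) :=
    ZMod.isSquare_neg_one_of_eq_sq_add_sq_of_isCoprime hn (Int.isCoprime_iff_gcd_eq_one.mpr hab)
  have h2 : q ∣ n.natAbs := by
    have := Int.natAbs_dvd_natAbs.mpr hdvd
    simpa using this
  exact (ZMod.exists_sq_eq_neg_one_iff.mp (ZMod.isSquare_neg_one_of_dvd h2 h1)) h3

/-- CRT over a finite set of pairwise coprime moduli -/
lemma aux_crt {ι : Type*} [DecidableEq ι] (T : Finset ι) (q : ι → ℕ) (c : ι → ℤ)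
    (hcop : (T : Set ι).Pairwise fun i j => Nat.Coprime (q i) (q j)) :
    ∃ r : ℤ, ∀ i ∈ T, (q i : ℤ) ∣ r - c i := by
  classical
  induction T using Finset.induction_on with
  | empty => exact ⟨0, by simp⟩
  | insert _ _ hiT ih =>
    rename_i i T
    obtain ⟨r, hr⟩ := ih (hcop.mono (by simp [Set.subset_insert]))
    have hco : Nat.Coprime (∏ j ∈ T, q j) (q i) := by
      refine Nat.Coprime.prod_left ?_
      intro j hj
      exact hcop (by simp [hj]) (by simp) (by rintro rfl; exact hiT hj)
    have hcoZ : IsCoprime ((∏ j ∈ T, q j : ℕ) : ℤ) ((q i : ℕ) : ℤ) :=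
      Nat.isCoprime_iff_coprime.mpr hco
    obtain ⟨u, v, huv⟩ := hcoZ
    refine ⟨r + (∏ j ∈ T, q j : ℕ) * (u * (c i - r)), ?_⟩
    intro j hj
    rcases Finset.mem_insert.mp hj with rfl | hj
    · exact ⟨v * (r - c j), by linear_combination (c j - r) * huv⟩
    · have h1 : (q j : ℤ) ∣ r - c j := hr j hj
      have h2 : (q j : ℤ) ∣ ((∏ k ∈ T, q k : ℕ) : ℤ) := by
        exact_mod_cast Int.natCast_dvd_natCast.mpr (Finset.dvd_prod_of_mem q hj)
      have : r + (∏ k ∈ T, q k : ℕ) * (u * (c i - r)) - c j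
          = (r - c j) + ((∏ k ∈ T, q k : ℕ) : ℤ) * (u * (c i - r)) := by ring
      rw [this]
      exact dvd_add h1 (h2.mul_right _)

/-- For every integer `g > 0` there are infinitely many integers `m = 2p` with `p` prime
such that:
(i) `m = 2(a² + b²)` for some relatively prime integers `a, b`, and every integer solution
`(a', b')` of `m = 2(a'² + b'²)` satisfies `(a', b') = (±a, ±b)` or `(a', b') = (±b, ±a)`;
(ii) for `0 < |k| ≤ g`, the integer `m + k` has no primitive representation as `a² + b²`;
(iii) `m` has no representation as `a² + 4 b²` with `a, b` integers. -/
theorem stmt_10 (g : ℤ) (hg : 0 < g) :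
    {m : ℤ | (∃ p : ℕ, p.Prime ∧ m = 2 * (p : ℤ)) ∧
      (∃ a b : ℤ, Int.gcd a b = 1 ∧ m = 2 * (a ^ 2 + b ^ 2) ∧
        ∀ a' b' : ℤ, m = 2 * (a' ^ 2 + b' ^ 2) →
          ((a' = a ∨ a' = -a) ∧ (b' = b ∨ b' = -b)) ∨
          ((a' = b ∨ a' = -b) ∧ (b' = a ∨ b' = -a))) ∧
      (∀ k : ℤ, 0 < |k| → |k| ≤ g →
        ¬ ∃ a b : ℤ, Int.gcd a b = 1 ∧ m + k = a ^ 2 + b ^ 2) ∧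
      (¬ ∃ a b : ℤ, m = a ^ 2 + 4 * b ^ 2)}.Infinite := by
  classical
  -- infinitely many primes ≡ 3 mod 4 that are > g
  have h3 : {q : ℕ | q.Prime ∧ (q : ZMod 4) = 3}.Infinite :=
    Nat.infinite_setOfPred_prime_and_eq_mod (by decide)
  have h3' : ({q : ℕ | q.Prime ∧ (q : ZMod 4) = 3} \ {q | q ≤ g.toNat}).Infinite :=
    h3.diff (Set.finite_le_nat g.toNat)
  let e : ℕ ↪ ({q : ℕ | q.Prime ∧ (q : ZMod 4) = 3} \ {q | q ≤ g.toNat} : Set ℕ) :=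
    Set.Infinite.natEmbedding _ h3'
  set q : ℤ → ℕ := fun k => (e (k + g).toNat : ℕ) with hqdef
  have hqmem : ∀ k, q k ∈ ({q : ℕ | q.Prime ∧ (q : ZMod 4) = 3} \ {q | q ≤ g.toNat} : Set ℕ) :=
    fun k => (e (k + g).toNat).2
  have hqprime : ∀ k, (q k).Prime := fun k => (hqmem k).1.1
  have hq3 : ∀ k, q k % 4 = 3 := by
    intro k
    have h1 : ((q k : ℕ) : ZMod 4) = ((3 : ℕ) : ZMod 4) := by
      have := (hqmem k).1.2; simpa using this
    have := (ZMod.natCast_eq_natCast_iff _ _ _).mp h1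
    unfold Nat.ModEq at this
    omega
  have hqg : ∀ k, g < (q k : ℤ) := by
    intro k
    have h1 : ¬ q k ≤ g.toNat := (hqmem k).2
    omega
  have hqinj : ∀ k₁ k₂, -g ≤ k₁ → -g ≤ k₂ → q k₁ = q k₂ → k₁ = k₂ := by
    intro k₁ k₂ h1 h2 h
    have h3 : (k₁ + g).toNat = (k₂ + g).toNat := e.injective (Subtype.ext h)
    omega
  set T : Finset ℤ := (Finset.Icc (-g) g).erase 0 with hTdef
  have hmemT : ∀ k ∈ T, k ≠ 0 ∧ -g ≤ k ∧ k ≤ g := by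
    intro k hk
    obtain ⟨h1, h2⟩ := Finset.mem_erase.mp hk
    rw [Finset.mem_Icc] at h2
    exact ⟨h1, h2.1, h2.2⟩
  set Q : ℤ → ℕ := fun k => if k = 0 then 4 else q k with hQdef
  set c : ℤ → ℤ := fun k => if k = 0 then 1 else -k * (((q k : ℤ) + 1) / 2) with hcdef
  have h0T : (0 : ℤ) ∉ T := by simp [hTdef]
  -- pairwise coprimality
  have hcop : ((insert (0:ℤ) T : Finset ℤ) : Set ℤ).Pairwise
      fun i j => Nat.Coprime (Q i) (Q j) := by
    have key : ∀ k ∈ T, Nat.Coprime 4 (q k) := by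
      intro k hk
      have hodd : ¬ 2 ∣ q k := by have := hq3 k; omega
      have h2 : Nat.Coprime 2 (q k) := (Nat.prime_two.coprime_iff_not_dvd).mpr hodd
      have h4 : Nat.Coprime (2 ^ 2) (q k) := Nat.Coprime.pow_left 2 h2
      simpa using h4
    intro i hi j hj hij
    simp only [Finset.coe_insert, Set.mem_insert_iff, Finset.mem_coe] at hi hj
    rcases hi with rfl | hi
    · rcases hj with rfl | hj
      · exact absurd rfl hij
      · have hj0 := (hmemT j hj).1
        simpa [hQdef, hj0] using key j hj
    · rcases hj with rfl | hj
      · have hi0 := (hmemT i hi).1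
        simpa [hQdef, hi0] using (key i hi).symm
      · have hi0 := (hmemT i hi).1
        have hj0 := (hmemT j hj).1
        have hne : q i ≠ q j := by
          intro h
          exact hij (hqinj i j (hmemT i hi).2.1 (hmemT j hj).2.1 h)
        simpa [hQdef, hi0, hj0] using (Nat.coprime_primes (hqprime i) (hqprime j)).mpr hne
  obtain ⟨r, hr⟩ := aux_crt (insert (0:ℤ) T) Q c hcop
  have hr0 : (4 : ℤ) ∣ r - 1 := by
    have := hr 0 (Finset.mem_insert_self _ _)
    simpa [hQdef, hcdef] using this
  have hrk : ∀ k ∈ T, (q k : ℤ) ∣ 2 * r + k := by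
    intro k hk
    have hk0 := (hmemT k hk).1
    have h1 : (q k : ℤ) ∣ r - c k := by
      have := hr k (Finset.mem_insert_of_mem hk)
      simpa [hQdef, hk0] using this
    have h2 : (2 : ℤ) ∣ (q k : ℤ) + 1 := by
      have := hq3 k; omega
    have hck : 2 * c k + k = -k * (q k : ℤ) := by
      have h3 : (2 : ℤ) * (((q k : ℤ) + 1) / 2) = (q k : ℤ) + 1 := Int.mul_ediv_cancel' h2
      simp only [hcdef, if_neg hk0]
      linear_combination (-k) * h3
    have : 2 * r + k = 2 * (r - c k) + (2 * c k + k) := by ring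
    rw [this, hck]
    exact dvd_add (Dvd.dvd.mul_left h1 2) ⟨-k, by ring⟩
  -- the modulus
  set N : ℕ := 4 * ∏ k ∈ T, q k with hNdef
  have hprodpos : 0 < ∏ k ∈ T, q k := Finset.prod_pos fun k _ => (hqprime k).pos
  have hNpos : 0 < N := by positivity
  haveI : NeZero N := ⟨hNpos.ne'⟩
  have h4N : (4 : ℕ) ∣ N := ⟨_, rfl⟩
  have hkN : ∀ k ∈ T, q k ∣ N := fun k hk =>
    Dvd.dvd.mul_left (Finset.dvd_prod_of_mem q hk) 4
  set R : ℕ := (r % N).toNat with hRdef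
  have hRr : (R : ℤ) = r % N := Int.toNat_of_nonneg (Int.emod_nonneg r (by exact_mod_cast hNpos.ne'))
  have hNrR : (N : ℤ) ∣ r - R := by
    rw [hRr, Int.emod_def]
    exact ⟨r / N, by ring⟩
  have hR4 : (4 : ℤ) ∣ (R : ℤ) - 1 := by
    have h1 : (4 : ℤ) ∣ r - R := dvd_trans (by exact_mod_cast Int.natCast_dvd_natCast.mpr h4N) hNrR
    have : (R : ℤ) - 1 = (r - 1) - (r - R) := by ring
    rw [this]
    exact dvd_sub hr0 h1
  have hRk : ∀ k ∈ T, (q k : ℤ) ∣ 2 * R + k := by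
    intro k hk
    have h1 : (q k : ℤ) ∣ r - R :=
      dvd_trans (by exact_mod_cast Int.natCast_dvd_natCast.mpr (hkN k hk)) hNrR
    have : 2 * (R : ℤ) + k = (2 * r + k) - 2 * (r - R) := by ring
    rw [this]
    exact dvd_sub (hrk k hk) (h1.mul_left 2)
  -- R is a unit mod N
  have hunit : IsUnit ((R : ℕ) : ZMod N) := by
    rw [ZMod.isUnit_iff_coprime]
    refine Nat.Coprime.mul_right ?_ ?_
    · have hodd : ¬ 2 ∣ R := by omega
      have h2 : Nat.Coprime 2 R := (Nat.prime_two.coprime_iff_not_dvd).mpr hodd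
      have h4 : Nat.Coprime R (2 ^ 2) := Nat.Coprime.pow_right 2 h2.symm
      simpa using h4
    · refine Nat.Coprime.prod_right ?_
      intro k hk
      obtain ⟨hk0, hk1, hk2⟩ := hmemT k hk
      refine Nat.Coprime.symm (((hqprime k).coprime_iff_not_dvd).mpr ?_)
      intro hdvd
      have h1 : (q k : ℤ) ∣ (R : ℤ) := Int.natCast_dvd_natCast.mpr hdvd
      have h2 := hRk k hk
      have h3 : (q k : ℤ) ∣ k := by
        have : (q k : ℤ) ∣ (2 * R + k) - 2 * R := dvd_sub h2 (h1.mul_left 2)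
        simpa using this
      have h4 : (q k : ℤ) ≤ |k| := Int.le_of_dvd (abs_pos.mpr hk0) ((dvd_abs _ _).mpr h3)
      have h5 := hqg k
      have h6 : |k| ≤ g := abs_le.mpr ⟨hk1, hk2⟩
      omega
  -- Dirichlet
  have hS2 : {p : ℕ | p.Prime ∧ (p : ZMod N) = ((R : ℕ) : ZMod N)}.Infinite :=
    Nat.infinite_setOfPred_prime_and_eq_mod hunit
  -- membership
  have hmem : ∀ p ∈ {p : ℕ | p.Prime ∧ (p : ZMod N) = ((R : ℕ) : ZMod N)},
      (2 * (p : ℤ)) ∈ {m : ℤ | (∃ p : ℕ, p.Prime ∧ m = 2 * (p : ℤ)) ∧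
      (∃ a b : ℤ, Int.gcd a b = 1 ∧ m = 2 * (a ^ 2 + b ^ 2) ∧
        ∀ a' b' : ℤ, m = 2 * (a' ^ 2 + b' ^ 2) →
          ((a' = a ∨ a' = -a) ∧ (b' = b ∨ b' = -b)) ∨
          ((a' = b ∨ a' = -b) ∧ (b' = a ∨ b' = -a))) ∧
      (∀ k : ℤ, 0 < |k| → |k| ≤ g →
        ¬ ∃ a b : ℤ, Int.gcd a b = 1 ∧ m + k = a ^ 2 + b ^ 2) ∧
      (¬ ∃ a b : ℤ, m = a ^ 2 + 4 * b ^ 2)} := by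
    rintro p ⟨hp, hpR⟩
    have hmod : p ≡ R [MOD N] := (ZMod.natCast_eq_natCast_iff _ _ _).mp hpR
    have hNpR : (N : ℤ) ∣ (R : ℤ) - (p : ℤ) := hmod.dvd
    have hp4 : (4 : ℤ) ∣ (p : ℤ) - 1 := by
      have h1 : (4 : ℤ) ∣ (R : ℤ) - p :=
        dvd_trans (by exact_mod_cast Int.natCast_dvd_natCast.mpr h4N) hNpR
      have : (p : ℤ) - 1 = ((R : ℤ) - 1) - ((R : ℤ) - p) := by ring
      rw [this]
      exact dvd_sub hR4 h1
    have hp41 : p % 4 = 1 := by omega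
    have hpk : ∀ k ∈ T, (q k : ℤ) ∣ 2 * (p : ℤ) + k := by
      intro k hk
      have h1 : (q k : ℤ) ∣ (R : ℤ) - p :=
        dvd_trans (by exact_mod_cast Int.natCast_dvd_natCast.mpr (hkN k hk)) hNpR
      have : 2 * (p : ℤ) + k = (2 * (R : ℤ) + k) - 2 * ((R : ℤ) - p) := by ring
      rw [this]
      exact dvd_sub (hRk k hk) (h1.mul_left 2)
    refine ⟨⟨p, hp, rfl⟩, ?_, ?_, ?_⟩
    · -- (i)
      haveI := Fact.mk hp
      obtain ⟨a, b, hab⟩ := Nat.Prime.sq_add_sq (p := p) (by omega)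
      have h : (p : ℤ) = (a : ℤ) ^ 2 + (b : ℤ) ^ 2 := by exact_mod_cast hab.symm
      refine ⟨a, b, aux_gcd_eq_one hp h, by rw [← h], ?_⟩
      intro a' b' h'
      have h'' : (p : ℤ) = a' ^ 2 + b' ^ 2 := by linarith
      exact aux_sq_add_sq_unique hp h h''
    · -- (ii)
      intro k hk1 hk2
      have hkT : k ∈ T := by
        refine Finset.mem_erase.mpr ⟨?_, Finset.mem_Icc.mpr (abs_le.mp hk2)⟩
        intro h; rw [h] at hk1; simp at hk1
      exact aux_noPrimRep (hqprime k) (hq3 k) (hpk k hkT)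
    · -- (iii)
      rintro ⟨a, b, hab⟩
      rcases Int.even_or_odd a with ⟨t, rfl⟩ | ⟨t, rfl⟩
      · have h1 : 2 * (p : ℤ) = 2 * (2 * (t ^ 2 + b ^ 2)) := by linear_combination hab
        have h2 : (2 : ℤ) ∣ (p : ℤ) := ⟨t ^ 2 + b ^ 2, mul_left_cancel₀ two_ne_zero h1⟩
        omega
      · have h2 : (4 : ℤ) ∣ 2 * (p : ℤ) - 1 := ⟨t ^ 2 + t + b ^ 2, by linear_combination hab⟩
        omega
  -- conclude
  have hinj : Set.InjOn (fun p : ℕ => 2 * (p : ℤ))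
      {p : ℕ | p.Prime ∧ (p : ZMod N) = ((R : ℕ) : ZMod N)} := by
    intro p1 _ p2 _ h
    simp only at h
    omega
  refine Set.Infinite.mono ?_ (hS2.image hinj)
  rintro m ⟨p, hpS, rfl⟩
  exact hmem p hpS
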